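/- Let O and R be disjoint nonempty finite index sets of cardinalities n_o and n_r. For i ∈ O let Y_it, Y_ic be real numbers with p_i ∈ (0,1), and for i ∈ R let Y_it, Y_ic be real numbers with common probability p_r ∈ (0,1). Let (W_i)_{i∈O∪R} be independent Bernoulli random variables with P(W_i = 1) = p_i for i ∈ O and P(W_i = 1) = p_r for i ∈ R. Define for O the quantities p_t = (1/n_o)·Σ_{i∈O} p_i, p_c = 1 − p_t, ρ_t, ρ_c, S_tt, S_cc, S_tc as usual (ρ_t = μ_t + s_t/p_t with μ_t = (1/n_o)Σ_{i∈O} Y_it, s_t = (1/n_o)Σ_{i∈O} Y_it p_i − μ_t p_t, and symmetrically for control; S_tt = (1/n_o)Σ_{i∈O} p_i(1−p_i)(Y_it−ρ_t)², etc.), and for R define μ_rt = (1/n_r)Σ_{i∈R} Y_it, μ_rc = (1/n_r)Σ_{i∈R} Y_ic and σ̄² = (1/n_r)·Σ_{i∈R} [ (Y_it − μ_rt)(1 − p_r) + (Y_ic − μ_rc)·p_r ]². Let L_o = (1/(n_o·p_t))·Σ_{i∈O} W_i(Y_it − ρ_t) − (1/(n_o·p_c))·Σ_{i∈O} (1−W_i)(Y_ic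 − ρ_c) and L_r = (1/(n_r·p_r))·Σ_{i∈R} W_i(Y_it − μ_rt) − (1/(n_r·(1−p_r)))·Σ_{i∈R} (1−W_i)(Y_ic − μ_rc), and set λ = n_o/(n_o + n_r). Then Var(λ·L_o + (1−λ)·L_r) = (λ/(n_o+n_r))·( S_tt/p_t² + S_cc/p_c² + 2·S_tc/(p_t·p_c) ) + ((1−λ)/(n_o+n_r))·( σ̄²/(p_r·(1−p_r)) ). -/

import Mathlib

open MeasureTheory ProbabilityTheory

/-- Corollary 3 (delta-method variance of the weighted-average estimator): with
independent Bernoulli treatment indicators, `Var(λ L_o + (1−λ) L_r)` equals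
`(λ/(n_o+n_r))(S_tt/p_t² + S_cc/p_c² + 2 S_tc/(p_t p_c))
  + ((1−λ)/(n_o+n_r)) σ̄²/(p_r(1−p_r))` where `λ = n_o/(n_o+n_r)`. -/
lemma var_const_add {Ω : Type*} [MeasurableSpace Ω] (μ : Measure Ω) [IsProbabilityMeasure μ]
    (c : ℝ) (X : Ω → ℝ) (hX : MemLp X 2 μ) :
    variance (fun ω => c + X ω) μ = variance X μ := by
  have hXi : Integrable X μ := hX.integrable one_le_two
  have hX2 : Integrable (fun ω => X ω ^ 2) μ := hX.integrable_sq
  have h1 : MemLp (fun ω => c + X ω) 2 μ := (memLp_const c).add hX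
  rw [variance_eq_sub h1, variance_eq_sub hX]
  have e1 : ((fun ω => c + X ω) ^ 2) = fun ω => c ^ 2 + (2 * c * X ω + X ω ^ 2) := by
    funext ω; simp [Pi.pow_apply]; ring
  have e2 : μ[fun ω => c + X ω] = c + μ[X] := by
    rw [integral_add (integrable_const c) hXi, integral_const]
    simp
  have e3 : μ[fun ω => c ^ 2 + (2 * c * X ω + X ω ^ 2)]
      = c ^ 2 + (2 * c * μ[X] + μ[fun ω => X ω ^ 2]) := by
    have h4 := integral_add (μ := μ) (integrable_const (c ^ 2))
      ((hXi.const_mul (2 * c)).add hX2)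
    have h5 := integral_add (μ := μ) (hXi.const_mul (2 * c)) hX2
    simp only [Pi.add_apply] at h4
    rw [h4, h5, MeasureTheory.integral_const_mul, integral_const]
    simp
  have e4 : μ[X ^ 2] = μ[fun ω => X ω ^ 2] := rfl
  rw [e1, e2, e3, e4]
  ring

lemma bernoulli_variance {Ω : Type*} [MeasurableSpace Ω] (μ : Measure Ω) [IsProbabilityMeasure μ]
    (W : Ω → ℝ) (hm : Measurable W) (h01 : ∀ ω, W ω = 0 ∨ W ω = 1)
    (p : ℝ) (hp0 : 0 ≤ p) (hp : μ {ω | W ω = 1} = ENNReal.ofReal p) :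
    variance W μ = p * (1 - p) := by
  have hs : MeasurableSet {ω | W ω = 1} := hm (measurableSet_singleton 1)
  have hWind : W = Set.indicator {ω | W ω = 1} (fun _ => (1:ℝ)) := by
    funext ω
    rcases h01 ω with h | h
    · rw [h, Set.indicator_of_notMem]
      simp [Set.mem_setOf_eq, h]
    · rw [h, Set.indicator_of_mem]
      exact h
  have hmem : MemLp W 2 μ := by
    refine memLp_of_bounded (a := 0) (b := 1) (Filter.Eventually.of_forall fun ω => ?_)
      hm.aestronglyMeasurable 2
    rcases h01 ω with h | h <;> simp [h]
  have hEW : μ[W] = p := by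
    rw [hWind, integral_indicator_const (1:ℝ) hs, measureReal_def, hp, smul_eq_mul, mul_one,
      ENNReal.toReal_ofReal hp0]
  have hsq : (W ^ 2) = W := by
    funext ω; rcases h01 ω with h | h <;> simp [Pi.pow_apply, h]
  rw [variance_eq_sub hmem, hsq, hEW]
  ring

theorem weighted_average_variance
    {Ω ι : Type*} [MeasurableSpace Ω] (μ : Measure Ω) [IsProbabilityMeasure μ]
    [DecidableEq ι] (O R : Finset ι)
    (hO : O.Nonempty) (hR : R.Nonempty) (hdisj : Disjoint O R)
    (Yt Yc p : ι → ℝ) (pr : ℝ) (hpr : pr ∈ Set.Ioo (0 : ℝ) 1)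
    (hpO : ∀ i ∈ O, p i ∈ Set.Ioo (0 : ℝ) 1)
    (hpR : ∀ i ∈ R, p i = pr)
    (W : ι → Ω → ℝ)
    (hWmeas : ∀ i, Measurable (W i))
    (hW01 : ∀ i, ∀ ω, W i ω = 0 ∨ W i ω = 1)
    (hWp : ∀ i ∈ O ∪ R, μ {ω | W i ω = 1} = ENNReal.ofReal (p i))
    (hindep : iIndepFun W μ)
    (no nr μt μc pt pc st sc ρt ρc Stt Scc Stc μrt μrc σ2 lam : ℝ)
    (hno : no = (O.card : ℝ)) (hnr : nr = (R.card : ℝ))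
    (hμt : μt = (1 / no) * ∑ i ∈ O, Yt i)
    (hμc : μc = (1 / no) * ∑ i ∈ O, Yc i)
    (hpt : pt = (1 / no) * ∑ i ∈ O, p i)
    (hpc : pc = 1 - pt)
    (hst : st = (1 / no) * (∑ i ∈ O, Yt i * p i) - μt * pt)
    (hsc : sc = (1 / no) * (∑ i ∈ O, Yc i * (1 - p i)) - μc * pc)
    (hρt : ρt = μt + st / pt)
    (hρc : ρc = μc + sc / pc)
    (hStt : Stt = (1 / no) * ∑ i ∈ O, p i * (1 - p i) * (Yt i - ρt) ^ 2)
    (hScc : Scc = (1 / no) * ∑ i ∈ O, p i * (1 - p i) * (Yc i - ρc) ^ 2)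
    (hStc : Stc = (1 / no) * ∑ i ∈ O, p i * (1 - p i) * (Yt i - ρt) * (Yc i - ρc))
    (hμrt : μrt = (1 / nr) * ∑ i ∈ R, Yt i)
    (hμrc : μrc = (1 / nr) * ∑ i ∈ R, Yc i)
    (hσ2 : σ2 = (1 / nr) * ∑ i ∈ R, ((Yt i - μrt) * (1 - pr) + (Yc i - μrc) * pr) ^ 2)
    (hlam : lam = no / (no + nr))
    (Lo Lr : Ω → ℝ)
    (hLo : Lo = fun ω =>
        (1 / (no * pt)) * ∑ i ∈ O, W i ω * (Yt i - ρt)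
          - (1 / (no * pc)) * ∑ i ∈ O, (1 - W i ω) * (Yc i - ρc))
    (hLr : Lr = fun ω =>
        (1 / (nr * pr)) * ∑ i ∈ R, W i ω * (Yt i - μrt)
          - (1 / (nr * (1 - pr))) * ∑ i ∈ R, (1 - W i ω) * (Yc i - μrc)) :
    variance (fun ω => lam * Lo ω + (1 - lam) * Lr ω) μ
      = (lam / (no + nr)) * (Stt / pt ^ 2 + Scc / pc ^ 2 + 2 * Stc / (pt * pc))
        + ((1 - lam) / (no + nr)) * (σ2 / (pr * (1 - pr))) := by
  subst hlam
  -- positivity facts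
  have hnoPos : 0 < no := by
    rw [hno]; exact_mod_cast Finset.card_pos.mpr hO
  have hnrPos : 0 < nr := by
    rw [hnr]; exact_mod_cast Finset.card_pos.mpr hR
  have hsumPos : 0 < no + nr := by linarith
  have hptPos : 0 < pt := by
    rw [hpt]
    have : 0 < ∑ i ∈ O, p i := Finset.sum_pos (fun i hi => (hpO i hi).1) hO
    positivity
  have hptLt : pt < 1 := by
    rw [hpt]
    have h1 : ∑ i ∈ O, p i < ∑ i ∈ O, (1:ℝ) :=
      Finset.sum_lt_sum_of_nonempty hO fun i hi => (hpO i hi).2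
    rw [Finset.sum_const, nsmul_eq_mul, mul_one, ← hno] at h1
    rw [div_mul_eq_mul_div, one_mul, div_lt_one hnoPos]
    exact h1
  have hpcPos : 0 < pc := by rw [hpc]; linarith
  have hprPos : 0 < pr := hpr.1
  have hprLt : pr < 1 := hpr.2
  have hno' : no ≠ 0 := ne_of_gt hnoPos
  have hnr' : nr ≠ 0 := ne_of_gt hnrPos
  have hsum' : no + nr ≠ 0 := ne_of_gt hsumPos
  have hpt' : pt ≠ 0 := ne_of_gt hptPos
  have hpc' : pc ≠ 0 := ne_of_gt hpcPos
  have hpr' : pr ≠ 0 := ne_of_gt hprPos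
  have hpr1' : (1:ℝ) - pr ≠ 0 := by linarith
  -- the coefficients
  set lam := no / (no + nr) with hlam
  set a : ι → ℝ := fun i =>
    if i ∈ O then lam * ((Yt i - ρt) / (no * pt) + (Yc i - ρc) / (no * pc))
    else (1 - lam) * ((Yt i - μrt) / (nr * pr) + (Yc i - μrc) / (nr * (1 - pr))) with ha
  set cst : ℝ := (∑ i ∈ O, (-lam * (Yc i - ρc) / (no * pc)))
    + ∑ i ∈ R, (-(1 - lam) * (Yc i - μrc) / (nr * (1 - pr))) with hcst
  -- rewrite the target random variable
  have hfun : (fun ω => lam * Lo ω + (1 - lam) * Lr ω)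
      = fun ω => cst + ∑ i ∈ O ∪ R, a i * W i ω := by
    funext ω
    rw [hLo, hLr, Finset.sum_union hdisj]
    have hOsum : ∑ i ∈ O, a i * W i ω
        = ∑ i ∈ O, (lam * ((Yt i - ρt) / (no * pt) + (Yc i - ρc) / (no * pc))) * W i ω :=
      Finset.sum_congr rfl fun i hi => by rw [ha]; simp only [if_pos hi]
    have hRsum : ∑ i ∈ R, a i * W i ω
        = ∑ i ∈ R, ((1 - lam) * ((Yt i - μrt) / (nr * pr)
            + (Yc i - μrc) / (nr * (1 - pr)))) * W i ω :=
      Finset.sum_congr rfl fun i hi => by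
        rw [ha]; simp only [if_neg (Finset.disjoint_right.mp hdisj hi)]
    rw [hOsum, hRsum, hcst]
    have eO : lam * ((1 / (no * pt)) * ∑ i ∈ O, W i ω * (Yt i - ρt)
          - (1 / (no * pc)) * ∑ i ∈ O, (1 - W i ω) * (Yc i - ρc))
        = ∑ i ∈ O, (-lam * (Yc i - ρc) / (no * pc)
            + (lam * ((Yt i - ρt) / (no * pt) + (Yc i - ρc) / (no * pc))) * W i ω) := by
      rw [Finset.mul_sum, Finset.mul_sum, ← Finset.sum_sub_distrib, Finset.mul_sum]
      exact Finset.sum_congr rfl fun i _ => by ring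
    have eR : (1 - lam) * ((1 / (nr * pr)) * ∑ i ∈ R, W i ω * (Yt i - μrt)
          - (1 / (nr * (1 - pr))) * ∑ i ∈ R, (1 - W i ω) * (Yc i - μrc))
        = ∑ i ∈ R, (-(1 - lam) * (Yc i - μrc) / (nr * (1 - pr))
            + ((1 - lam) * ((Yt i - μrt) / (nr * pr)
              + (Yc i - μrc) / (nr * (1 - pr)))) * W i ω) := by
      rw [Finset.mul_sum, Finset.mul_sum, ← Finset.sum_sub_distrib, Finset.mul_sum]
      exact Finset.sum_congr rfl fun i _ => by ring
    rw [eO, eR, Finset.sum_add_distrib, Finset.sum_add_distrib]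
    ring
  -- Memℒp facts
  have hmemW : ∀ i, MemLp (W i) 2 μ := fun i =>
    memLp_of_bounded (a := 0) (b := 1)
      (Filter.Eventually.of_forall fun ω => by rcases hW01 i ω with h | h <;> simp [h])
      (hWmeas i).aestronglyMeasurable 2
  have hmemX : ∀ i ∈ O ∪ R, MemLp (fun ω => a i * W i ω) 2 μ := fun i _ =>
    (hmemW i).const_mul (a i)
  -- variance computation
  have hvar : variance (fun ω => lam * Lo ω + (1 - lam) * Lr ω) μ
      = ∑ i ∈ O ∪ R, a i ^ 2 * (p i * (1 - p i)) := by
    rw [hfun, var_const_add μ cst _ (memLp_finsetSum (O ∪ R) hmemX)]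
    have hps : (fun ω => ∑ i ∈ O ∪ R, a i * W i ω)
        = ∑ i ∈ O ∪ R, (fun ω => a i * W i ω) := by
      funext ω; rw [Finset.sum_apply]
    rw [hps, IndepFun.variance_sum hmemX ?_]
    · refine Finset.sum_congr rfl fun i hi => ?_
      rw [variance_const_mul]
      congr 1
      have hpi : 0 ≤ p i := by
        rcases Finset.mem_union.mp hi with h | h
        · exact (hpO i h).1.le
        · rw [hpR i h]; exact hprPos.le
      exact bernoulli_variance μ (W i) (hWmeas i) (hW01 i) (p i) hpi (hWp i hi)
    · intro i _ j _ hij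
      have hWij : IndepFun (W i) (W j) μ := hindep.indepFun hij
      exact hWij.comp (measurable_const_mul (a i)) (measurable_const_mul (a j))
  rw [hvar, Finset.sum_union hdisj]
  -- O part
  have hOpart : ∑ i ∈ O, a i ^ 2 * (p i * (1 - p i))
      = (lam / (no + nr)) * (Stt / pt ^ 2 + Scc / pc ^ 2 + 2 * Stc / (pt * pc)) := by
    rw [hStt, hScc, hStc, hlam]
    have e : ∀ s1 s2 s3 : ℝ,
        (no / (no + nr) / (no + nr)) * ((1 / no * s1) / pt ^ 2 + (1 / no * s2) / pc ^ 2
          + 2 * (1 / no * s3) / (pt * pc))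
        = (no / (no + nr) / (no + nr) / (no * pt ^ 2)) * s1
          + (no / (no + nr) / (no + nr) / (no * pc ^ 2)) * s2
          + (2 * no / (no + nr) / (no + nr) / (no * pt * pc)) * s3 :=
      fun s1 s2 s3 => by ring
    rw [e, Finset.mul_sum, Finset.mul_sum, Finset.mul_sum, ← Finset.sum_add_distrib,
      ← Finset.sum_add_distrib]
    refine Finset.sum_congr rfl fun i hi => ?_
    rw [ha]
    simp only [if_pos hi]
    rw [hlam]
    field_simp
    ring
  -- R part
  have hRpart : ∑ i ∈ R, a i ^ 2 * (p i * (1 - p i))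
      = ((1 - lam) / (no + nr)) * (σ2 / (pr * (1 - pr))) := by
    rw [hσ2, hlam]
    have e : ∀ s : ℝ,
        ((1 - no / (no + nr)) / (no + nr)) * ((1 / nr * s) / (pr * (1 - pr)))
        = ((1 - no / (no + nr)) / (no + nr) / (nr * pr * (1 - pr))) * s :=
      fun s => by field_simp
    rw [e, Finset.mul_sum]
    refine Finset.sum_congr rfl fun i hi => ?_
    rw [ha]
    simp only [if_neg (Finset.disjoint_right.mp hdisj hi)]
    rw [hlam, hpR i hi]
    field_simp
    ring
  rw [hOpart, hRpart]
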